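/- Let O_K be a discrete valuation ring with maximal ideal ℘, α integral over O_K with monic minimal polynomial h, Λ = O_K[α], β ∈ O_K, and suppose h₀ = X - β reduces mod ℘ to an irreducible factor of h mod ℘. Then the prime Q = (℘, α - β) of Λ is not invertible if and only if h(β) ≡ 0 mod ℘² and h'(β) ≡ 0 mod ℘. -/

import Mathlib

open Polynomial

set_option synthInstance.maxHeartbeats 1000000
set_option maxHeartbeats 1000000

/-- Let `O_K` be a discrete valuation ring with maximal ideal `℘`, `α` integral
over `O_K` with monic minimal polynomial `h`, `Λ = O_K[α]`, `β ∈ O_K`, and suppose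
`h₀ = X - β` reduces mod `℘` to an irreducible factor of `h` mod `℘`.  Then the prime
`Q = (℘, α - β)` of `Λ` is not invertible iff `h(β) ≡ 0 mod ℘²` and `h'(β) ≡ 0 mod ℘`. -/
theorem prime_not_invertible_iff_deriv {O_K L : Type*} [CommRing O_K] [IsDomain O_K]
    [IsDiscreteValuationRing O_K] [Field L] [Algebra O_K L] [NoZeroSMulDivisors O_K L]
    (α : L) (hα : IsIntegral O_K α) (β : O_K)
    (hdvd : (X - C β).map (Ideal.Quotient.mk (IsLocalRing.maximalIdeal O_K)) ∣
      (minpoly O_K α).map (Ideal.Quotient.mk (IsLocalRing.maximalIdeal O_K))) :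
    ¬ IsUnit
        (((Ideal.map (algebraMap O_K ↥(Algebra.adjoin O_K ({α} : Set L)))
              (IsLocalRing.maximalIdeal O_K) ⊔
            Ideal.span {(⟨α, Algebra.self_mem_adjoin_singleton O_K α⟩ :
                ↥(Algebra.adjoin O_K ({α} : Set L))) -
              algebraMap O_K ↥(Algebra.adjoin O_K ({α} : Set L)) β}) :
          Ideal ↥(Algebra.adjoin O_K ({α} : Set L))) :
          FractionalIdeal (nonZeroDivisors ↥(Algebra.adjoin O_K ({α} : Set L)))
            (FractionRing ↥(Algebra.adjoin O_K ({α} : Set L)))) ↔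
      ((minpoly O_K α).eval β ∈ (IsLocalRing.maximalIdeal O_K) ^ 2 ∧
        (minpoly O_K α).derivative.eval β ∈ IsLocalRing.maximalIdeal O_K) := by
  set ℘ := IsLocalRing.maximalIdeal O_K with h℘def
  set A := Algebra.adjoin O_K ({α} : Set L) with hAdef
  set h := minpoly O_K α with hhdef
  set a : A := ⟨α, Algebra.self_mem_adjoin_singleton O_K α⟩ with hadef
  set ψ : O_K[X] →ₐ[O_K] A := aeval a with hψdef
  have hval : ∀ f : O_K[X], ((ψ f : A) : L) = aeval α f := fun f =>
    Polynomial.aeval_subalgebra_coe f A a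
  -- surjectivity
  have hψsurj : Function.Surjective ψ := by
    intro z
    have hz : (z : L) ∈ (Polynomial.aeval (R := O_K) α).range := by
      rw [← Algebra.adjoin_singleton_eq_range_aeval]; exact z.2
    obtain ⟨f, hf⟩ := hz
    refine ⟨f, Subtype.ext ?_⟩
    rw [hval f]   -- need hval earlier
    exact hf
  -- injectivity of maps
  have hinj : Function.Injective (algebraMap O_K A) := by
    intro u v huv
    apply FaithfulSMul.algebraMap_injective O_K L
    have : algebraMap A L (algebraMap O_K A u) = algebraMap A L (algebraMap O_K A v) := by rw [huv]
    rwa [← IsScalarTower.algebraMap_apply, ← IsScalarTower.algebraMap_apply] at this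
  have hψh : ψ h = 0 := by
    apply Subtype.ext
    rw [hval h]
    exact minpoly.aeval O_K α
  -- kernel of ψ
  have hker : ∀ f : O_K[X], ψ f = 0 ↔ h ∣ f := by
    intro f
    constructor
    · intro hf
      apply minpoly.isIntegrallyClosed_dvd hα
      have : ((ψ f : A) : L) = 0 := by rw [hf]; simp
      rwa [hval f] at this
    · rintro ⟨g, rfl⟩
      rw [map_mul, hψh, zero_mul]
  -- uniformizer
  obtain ⟨π, hπirr⟩ := IsDiscreteValuationRing.exists_irreducible O_K
  have h℘π : ℘ = Ideal.span {π} := (IsDiscreteValuationRing.irreducible_iff_uniformizer π).mp hπirr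
  have hπ0 : π ≠ 0 := hπirr.ne_zero
  -- c = h(β) ∈ ℘
  set c := h.eval β with hcdef
  have hc℘ : c ∈ ℘ := by
    rw [← Ideal.Quotient.eq_zero_iff_mem]
    obtain ⟨w, hw⟩ := hdvd
    have := congrArg (fun p => p.eval (Ideal.Quotient.mk ℘ β)) hw
    simpa [eval_map, eval₂_at_apply] using this
  obtain ⟨d, hcd⟩ : ∃ d, c = π * d := by
    rwa [h℘π, Ideal.mem_span_singleton] at hc℘
  -- the quotient q and the division identity
  set q := h /ₘ (X - C β) with hqdef
  have hq : h = (X - C β) * q + C c := by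
    have := modByMonic_add_div h (X - C β)
    rw [modByMonic_X_sub_C_eq_C_eval] at this
    rw [← hcdef, ← hqdef] at this
    rw [← this]; ring
  have hn : 0 < h.natDegree := minpoly.natDegree_pos hα
  have hqdeg : q.natDegree = h.natDegree - 1 := by
    rw [hqdef, natDegree_divByMonic h (monic_X_sub_C β), natDegree_X_sub_C]
  have hmonic : h.Monic := minpoly.monic hα
  have hqmonic : q.Monic := by
    have h1 : ((X - C β) * q).Monic := by
      have : (X - C β) * q = h + (-C c) := by rw [hq]; ring
      rw [this]
      refine hmonic.add_of_left ?_
      rw [degree_neg]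
      calc (C c).degree ≤ 0 := degree_C_le
        _ < h.degree := by
          rw [degree_eq_natDegree hmonic.ne_zero]
          exact_mod_cast hn
    exact (monic_X_sub_C β).of_mul_monic_left h1
  have hq'β : q.eval β = h.derivative.eval β := by
    have := congrArg (fun p => p.derivative.eval β) hq
    simp [derivative_mul] at this
    exact this.symm
  -- the ideal J in the polynomial ring and Q in A
  set t : A := a - algebraMap O_K A β with htdef
  have hψXβ : ψ (X - C β) = t := by
    rw [map_sub, hψdef]; simp [htdef, aeval_C]
  set J : Ideal O_K[X] := Ideal.span {C π, X - C β} with hJdef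
  have hJmem : ∀ f : O_K[X], f ∈ J ↔ f.eval β ∈ ℘ := by
    intro f
    constructor
    · intro hf
      refine Submodule.span_induction ?_ ?_ ?_ ?_ hf
      · rintro g (rfl | rfl)
        · simpa [h℘π] using Ideal.mem_span_singleton_self π
        · simp
      · simp
      · intro u v _ _ hu hv; simpa [eval_add] using Ideal.add_mem ℘ hu hv
      · intro r u _ hu
        simpa [eval_mul] using Ideal.mul_mem_left ℘ (r.eval β) hu
    · intro hf
      have h1 : X - C β ∣ f - C (f.eval β) := X_sub_C_dvd_sub_C_eval
      obtain ⟨g, hg⟩ := h1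
      obtain ⟨e, he⟩ : ∃ e, f.eval β = π * e := by
        rwa [h℘π, Ideal.mem_span_singleton] at hf
      have : f = (X - C β) * g + C π * C e := by
        rw [← hg, ← C_mul, ← he]; ring
      rw [this]
      exact Ideal.add_mem _
        (Ideal.mul_mem_right _ _ (Ideal.subset_span (by simp)))
        (Ideal.mul_mem_right _ _ (Ideal.subset_span (by simp)))
  have hhJ : h ∈ J := by rw [hJmem]; exact hc℘
  have hkerJ : ∀ f : O_K[X], ψ f = 0 → f ∈ J := by
    intro f hf
    obtain ⟨g, hg⟩ := (hker f).mp hf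
    rw [hg]
    exact Ideal.mul_mem_right _ _ hhJ
  set Q : Ideal A := Ideal.map (algebraMap O_K A) ℘ ⊔ Ideal.span {t} with hQdef
  have hQspan : Q = Ideal.span {algebraMap O_K A π, t} := by
    rw [hQdef, h℘π, Ideal.map_span, Set.image_singleton, Ideal.span_insert]
  have hQmap : Q = Ideal.map ψ.toRingHom J := by
    rw [hQspan, hJdef, Ideal.map_span]
    congr 1
    rw [Set.image_insert_eq, Set.image_singleton]
    congr 1
    · simp [hψdef, aeval_C]
    · rw [show (ψ.toRingHom : O_K[X] → A) = ψ from rfl, hψXβ]  -- may need fix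
  have hmem : ∀ f : O_K[X], ψ f ∈ Q ↔ f.eval β ∈ ℘ := by
    intro f
    rw [← hJmem f, hQmap]
    constructor
    · intro hf
      have := Ideal.comap_map_of_surjective ψ.toRingHom hψsurj J
      have hf2 : f ∈ Ideal.comap ψ.toRingHom (Ideal.map ψ.toRingHom J) := hf
      rw [this] at hf2
      rcases Submodule.mem_sup.mp hf2 with ⟨u, hu, v, hv, rfl⟩
      exact Ideal.add_mem _ hu (hkerJ v (by simpa [RingHom.mem_ker] using hv))
    · intro hf
      exact Ideal.mem_map_of_mem _ hf
  -- membership corollaries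
  have hπQ : algebraMap O_K A π ∈ Q := by
    have := (hmem (C π)).mpr (by simpa [h℘π] using Ideal.mem_span_singleton_self π)
    simpa [hψdef, aeval_C] using this
  have htQ : t ∈ Q := by rw [← hψXβ]; exact (hmem _).mpr (by simp)
  -- Q is "maximal" in the needed sense
  have hQtop : ∀ (I : Ideal A), Q ≤ I → ∀ w, w ∈ I → w ∉ Q → I = ⊤ := by
    intro I hQI w hwI hwQ
    obtain ⟨g, rfl⟩ := hψsurj w
    rw [hmem] at hwQ
    obtain ⟨r, i, hi, hri⟩ := IsLocalRing.maximalIdeal.isMaximal O_K |>.exists_inv hwQ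
    rw [Ideal.eq_top_iff_one]
    have h1 : ψ (C r * g) ∈ I := by
      rw [map_mul]; exact Ideal.mul_mem_left _ _ hwI
    have h2 : ψ (1 - C r * g) ∈ Q := by
      apply (hmem _).mpr
      have heval : eval β ((1 : O_K[X]) - C r * g) = i := by
        simp only [eval_sub, eval_one, eval_mul, eval_C]
        linear_combination -hri
      rw [heval]; exact hi
    have := Ideal.add_mem I h1 (hQI h2)
    simpa using this
  -- key relation
  have hψC : ∀ r : O_K, ψ (C r) = algebraMap O_K A r := by intro r; simp [hψdef, aeval_C]
  have hkey : t * ψ q = - algebraMap O_K A c := by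
    have h2 := congrArg ψ hq
    rw [map_add, map_mul, hψXβ, hψh, hψC] at h2
    linear_combination -h2
  -- non-membership : ψ q ∉ π A
  haveI : Nontrivial (O_K ⧸ ℘) :=
    Ideal.Quotient.nontrivial_iff.mpr (IsLocalRing.maximalIdeal.isMaximal O_K).ne_top
  have hnonmem : ∀ z : A, algebraMap O_K A π * z ≠ ψ q := by
    intro z hzq
    obtain ⟨g, rfl⟩ := hψsurj z
    have h0 : ψ (C π * g - q) = 0 := by
      rw [map_sub, map_mul, hψC, hzq, sub_self]
    obtain ⟨w, hw⟩ := (hker _).mp h0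
    set m := Ideal.Quotient.mk ℘ with hmdef
    have hmπ : m π = 0 := Ideal.Quotient.eq_zero_iff_mem.mpr
      (by rw [h℘π]; exact Ideal.mem_span_singleton_self π)
    have hmapeq : q.map m = (h.map m) * (-(w.map m)) := by
      have h2 := congrArg (fun p => p.map m) hw
      simp only [Polynomial.map_sub, Polynomial.map_mul, Polynomial.map_C, hmπ, C_0,
        zero_mul, zero_sub] at h2
      linear_combination -h2
    have hq0 : q.map m ≠ 0 := (hqmonic.map m).ne_zero
    have hdvd2 : h.map m ∣ q.map m := ⟨-(w.map m), hmapeq⟩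
    have hdeg := Polynomial.natDegree_le_of_dvd hdvd2 hq0
    rw [hmonic.natDegree_map m] at hdeg
    have hdeg2 : (q.map m).natDegree ≤ q.natDegree := Polynomial.natDegree_map_le
    rw [hqdeg] at hdeg2
    omega
  -- fractional ideals
  have hπ'ne : algebraMap O_K A π ≠ 0 := fun e => hπ0 (hinj (by rw [e, map_zero]))
  set K := FractionRing A with hKdef
  set ι : A →+* K := algebraMap A K with hιdef
  have hιinj : Function.Injective ι := IsFractionRing.injective A K
  have hπ'0 : ι (algebraMap O_K A π) ≠ 0 := fun e => hπ'ne (hιinj (by rw [e, map_zero]))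
  set x : K := ι (ψ q) / ι (algebraMap O_K A π) with hxdef
  have hxπ : x * ι (algebraMap O_K A π) = ι (ψ q) := div_mul_cancel₀ _ hπ'0
  have hxt : x * ι t = ι (- algebraMap O_K A d) := by
    have hmuls : ι (ψ q) * ι t = ι (- algebraMap O_K A d) * ι (algebraMap O_K A π) := by
      rw [← map_mul, ← map_mul, mul_comm (ψ q) t, hkey]
      congr 1
      rw [hcd, map_mul]
      ring
    rw [hxdef, div_mul_eq_mul_div, hmuls, mul_div_assoc, div_self hπ'0, mul_one]
  have hQF : (Q : FractionalIdeal (nonZeroDivisors A) K) =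
      FractionalIdeal.spanSingleton (nonZeroDivisors A) (ι (algebraMap O_K A π)) +
      FractionalIdeal.spanSingleton (nonZeroDivisors A) (ι t) := by
    rw [hQspan, Ideal.span_insert, FractionalIdeal.coeIdeal_sup,
      FractionalIdeal.coeIdeal_span_singleton, FractionalIdeal.coeIdeal_span_singleton]
  set P : FractionalIdeal (nonZeroDivisors A) K :=
    FractionalIdeal.spanSingleton (nonZeroDivisors A) x * ↑Q with hPdef
  have hP : P = FractionalIdeal.spanSingleton (nonZeroDivisors A) (ι (ψ q)) +
      FractionalIdeal.spanSingleton (nonZeroDivisors A) (ι (- algebraMap O_K A d)) := by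
    rw [hPdef, hQF, mul_add, FractionalIdeal.spanSingleton_mul_spanSingleton,
      FractionalIdeal.spanSingleton_mul_spanSingleton, hxπ, hxt]
  -- helper: elements of P that are images give members of criteria
  have hπ℘ : π ∈ ℘ := by rw [h℘π]; exact Ideal.mem_span_singleton_self π
  have hrepr : -(algebraMap O_K A d) = ψ (-C d) := by rw [map_neg, hψC]
  constructor
  · -- not invertible → conditions
    intro hnu
    by_contra hcon
    apply hnu
    rw [not_and_or] at hcon
    set Jf : FractionalIdeal (nonZeroDivisors A) K :=
      FractionalIdeal.spanSingleton (nonZeroDivisors A) x + 1 with hJfdef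
    have hQJ : (↑Q : FractionalIdeal (nonZeroDivisors A) K) * Jf = P + ↑Q := by
      rw [hJfdef, mul_add, mul_one, hPdef, mul_comm]
    have hP1 : P ≤ 1 := by
      rw [hP, ← FractionalIdeal.sup_eq_add]
      refine sup_le ?_ ?_ <;>
        exact FractionalIdeal.spanSingleton_le_iff_mem.mpr
          ((FractionalIdeal.mem_one_iff _).mpr ⟨_, rfl⟩)
    have hle1 : (↑Q : FractionalIdeal (nonZeroDivisors A) K) * Jf ≤ 1 := by
      rw [hQJ, ← FractionalIdeal.sup_eq_add]
      exact sup_le hP1 FractionalIdeal.coeIdeal_le_one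
    obtain ⟨I, hI⟩ := FractionalIdeal.le_one_iff_exists_coeIdeal.mp hle1
    have hQI : Q ≤ I := by
      rw [← FractionalIdeal.coeIdeal_le_coeIdeal K, hI, hQJ, ← FractionalIdeal.sup_eq_add]
      exact le_sup_right
    have hmemI : ∀ w : A, ι w ∈ P → w ∈ I := by
      intro w hw
      have hw2 : ι w ∈ (↑I : FractionalIdeal (nonZeroDivisors A) K) := by
        rw [hI, hQJ, ← FractionalIdeal.sup_eq_add]
        exact (le_sup_left :
          P ≤ P ⊔ (↑Q : FractionalIdeal (nonZeroDivisors A) K)) hw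
      obtain ⟨w', hw', hww'⟩ := (FractionalIdeal.mem_coeIdeal _).mp hw2
      rwa [← hιinj hww']
    have hItop : I = ⊤ := by
      rcases hcon with hcon | hcon
      · -- c ∉ ℘² : use w = -(algebraMap d)
        have hdnot : d ∉ ℘ := by
          intro hd
          refine hcon ?_
          rw [pow_two, hcd]
          exact Ideal.mul_mem_mul hπ℘ hd
        refine hQtop I hQI (-(algebraMap O_K A d)) ?_ ?_
        · refine hmemI _ ?_
          rw [hP, ← FractionalIdeal.sup_eq_add]
          exact (le_sup_right : _ ≤ FractionalIdeal.spanSingleton (nonZeroDivisors A)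
            (ι (ψ q)) ⊔ _) (FractionalIdeal.mem_spanSingleton_self _ _)
        · rw [hrepr, hmem]
          simpa using fun hh => hdnot ((Submodule.neg_mem_iff ℘).mp hh)
      · -- h'(β) ∉ ℘ : use w = ψ q
        refine hQtop I hQI (ψ q) ?_ ?_
        · refine hmemI _ ?_
          rw [hP, ← FractionalIdeal.sup_eq_add]
          exact (le_sup_left : FractionalIdeal.spanSingleton (nonZeroDivisors A)
            (ι (ψ q)) ≤ _ ⊔ _) (FractionalIdeal.mem_spanSingleton_self _ _)
        · rw [hmem, hq'β]
          exact hcon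
    refine IsUnit.of_mul_eq_one Jf ?_
    rw [← hI, hItop, FractionalIdeal.coeIdeal_top]
  · rintro ⟨hc2, hd℘⟩ hu
    have hdQ : d ∈ ℘ := by
      rw [h℘π, Ideal.span_singleton_pow, Ideal.mem_span_singleton] at hc2
      obtain ⟨e, he⟩ := hc2
      rw [h℘π, Ideal.mem_span_singleton]
      refine ⟨e, mul_left_cancel₀ hπ0 ?_⟩
      rw [← hcd, he]
      ring
    have hψqQ : ψ q ∈ Q := (hmem q).mpr (by rw [hq'β]; exact hd℘)
    have hdQ' : -(algebraMap O_K A d) ∈ Q := by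
      rw [hrepr]
      refine (hmem _).mpr ?_
      simpa using Submodule.neg_mem ℘ hdQ
    have hPQ : P ≤ (↑Q : FractionalIdeal (nonZeroDivisors A) K) := by
      rw [hP, ← FractionalIdeal.sup_eq_add]
      refine sup_le ?_ ?_
      · exact FractionalIdeal.spanSingleton_le_iff_mem.mpr
          ((FractionalIdeal.mem_coeIdeal _).mpr ⟨_, hψqQ, rfl⟩)
      · exact FractionalIdeal.spanSingleton_le_iff_mem.mpr
          ((FractionalIdeal.mem_coeIdeal _).mpr ⟨_, hdQ', rfl⟩)
    have hone : (↑Q : FractionalIdeal (nonZeroDivisors A) K) * ↑hu.unit⁻¹ = 1 := by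
      have h3 := hu.unit.mul_inv
      rwa [IsUnit.unit_spec] at h3
    have hxle : FractionalIdeal.spanSingleton (nonZeroDivisors A) x ≤ 1 := by
      calc FractionalIdeal.spanSingleton (nonZeroDivisors A) x
          = FractionalIdeal.spanSingleton (nonZeroDivisors A) x *
            ((↑Q : FractionalIdeal (nonZeroDivisors A) K) * ↑hu.unit⁻¹) := by
            rw [hone, mul_one]
        _ = P * ↑hu.unit⁻¹ := by rw [hPdef, mul_assoc]
        _ ≤ (↑Q : FractionalIdeal (nonZeroDivisors A) K) * ↑hu.unit⁻¹ :=
            mul_le_mul_left hPQ _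
        _ = 1 := hone
    have hx1 : x ∈ (1 : FractionalIdeal (nonZeroDivisors A) K) :=
      hxle (FractionalIdeal.mem_spanSingleton_self _ _)
    obtain ⟨z, hz⟩ := (FractionalIdeal.mem_one_iff _).mp hx1
    refine hnonmem z (hιinj ?_)
    rw [map_mul, mul_comm, ← hxπ, hz]
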